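/- Let G₁₀ be the 6-vertex graph with edges v₁v₂, v₁v₃, v₁v₄, v₂v₃, v₂v₅, v₃v₅, v₄v₆, and for 1 ≤ i ≤ (n−4)/2 let F_n(i) = G₁₀∘(1,1,1,1,i,n−4−i) with spectral radius ρᵢ. Then ρᵢ satisfies the system: (ρᵢ² − n + i + 3)(ρᵢ² − ρᵢ − 2i − 2) = 2, with ρᵢ² − n + i + 3 > 0 and ρᵢ² − ρᵢ − 2i − 2 > 0. -/

import Mathlib

set_option maxHeartbeats 1000000 in
private lemma exists_good_root (iR J : ℝ) (hi : 1 ≤ iR) (hiJ : iR ≤ J) :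
    ∃ x₀ r : ℝ, 5 / 2 ≤ x₀ ∧ x₀ < r ∧
      (r ^ 2 - J - 1) * (r ^ 2 - r - 2 * iR - 2) = 2 ∧
      ∀ x : ℝ, x₀ < x → 0 < x ^ 2 - J - 1 ∧ 0 < x ^ 2 - x - 2 * iR - 2 := by
  have hJ1 : (1 : ℝ) ≤ J := le_trans hi hiJ
  set a0 := Real.sqrt (J + 1) with ha0def
  set b0 := (1 + Real.sqrt (8 * iR + 9)) / 2 with hb0def
  set x₀ := max a0 b0 with hx₀def
  have ha0sq : a0 ^ 2 = J + 1 := Real.sq_sqrt (by linarith)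
  have ha0nn : 0 ≤ a0 := Real.sqrt_nonneg _
  have hbsq : Real.sqrt (8 * iR + 9) ^ 2 = 8 * iR + 9 := Real.sq_sqrt (by linarith)
  have hbnn : 0 ≤ Real.sqrt (8 * iR + 9) := Real.sqrt_nonneg _
  have hbge4 : (4 : ℝ) ≤ Real.sqrt (8 * iR + 9) := by nlinarith [hbsq, hbnn, hi]
  have hb0eq : b0 ^ 2 - b0 = 2 * iR + 2 := by
    rw [hb0def]; nlinarith [hbsq]
  have hb0ge : (5 / 2 : ℝ) ≤ b0 := by rw [hb0def]; linarith
  have hx₀a : a0 ≤ x₀ := le_max_left _ _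
  have hx₀b : b0 ≤ x₀ := le_max_right _ _
  have hx₀ge : (5 / 2 : ℝ) ≤ x₀ := le_trans hb0ge hx₀b
  have hFpos : ∀ x : ℝ, x₀ < x → 0 < x ^ 2 - J - 1 := by
    intro x hx
    have hax : a0 < x := lt_of_le_of_lt hx₀a hx
    have h2 : a0 ^ 2 < x ^ 2 := by nlinarith [ha0nn]
    linarith [ha0sq]
  have hGpos : ∀ x : ℝ, x₀ < x → 0 < x ^ 2 - x - 2 * iR - 2 := by
    intro x hx
    have hbx : b0 < x := lt_of_le_of_lt hx₀b hx
    have h2 : 0 < (x - b0) * (x + b0 - 1) := mul_pos (by linarith) (by linarith)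
    nlinarith [hb0eq, h2]
  have hq0 : (x₀ ^ 2 - J - 1) * (x₀ ^ 2 - x₀ - 2 * iR - 2) = 0 := by
    rcases max_choice a0 b0 with h | h
    · rw [hx₀def, h, show a0 ^ 2 - J - 1 = 0 by linarith [ha0sq], zero_mul]
    · rw [hx₀def, h, show b0 ^ 2 - b0 - 2 * iR - 2 = 0 by linarith [hb0eq], mul_zero]
  set M := x₀ + J + 2 * iR + 14 with hMdef
  have hMx₀ : x₀ < M := by rw [hMdef]; linarith
  have hM1 : (2 : ℝ) ≤ M ^ 2 - J - 1 := by
    rw [hMdef]; nlinarith [hx₀ge, hi, hJ1, sq_nonneg (x₀ + J + 2 * iR + 13)]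
  have hM2 : (2 : ℝ) ≤ M ^ 2 - M - 2 * iR - 2 := by
    rw [hMdef]; nlinarith [hx₀ge, hi, hJ1, sq_nonneg (x₀ + J + 2 * iR + 13)]
  have hqM : (0 : ℝ) ≤ (M ^ 2 - J - 1) * (M ^ 2 - M - 2 * iR - 2) - 2 := by
    nlinarith [hM1, hM2]
  have hcont : ContinuousOn
      (fun x : ℝ => (x ^ 2 - J - 1) * (x ^ 2 - x - 2 * iR - 2) - 2) (Set.Icc x₀ M) := by
    fun_prop
  have hIcc := intermediate_value_Icc (le_of_lt hMx₀) hcont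
  have h0mem : (0 : ℝ) ∈ Set.Icc
      ((x₀ ^ 2 - J - 1) * (x₀ ^ 2 - x₀ - 2 * iR - 2) - 2)
      ((M ^ 2 - J - 1) * (M ^ 2 - M - 2 * iR - 2) - 2) := by
    constructor
    · rw [hq0]; norm_num
    · linarith
  obtain ⟨r, hrIcc, hr0⟩ := hIcc h0mem
  have hrq : (r ^ 2 - J - 1) * (r ^ 2 - r - 2 * iR - 2) = 2 := by
    have := hr0; dsimp at this; linarith
  have hrx₀ : x₀ < r := by
    rcases lt_or_eq_of_le hrIcc.1 with h | h
    · exact h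
    · exfalso
      rw [← h] at hrq
      rw [hq0] at hrq
      norm_num at hrq
  exact ⟨x₀, r, hx₀ge, hrx₀, hrq, fun x hx => ⟨hFpos x hx, hGpos x hx⟩⟩


attribute [local instance] Classical.propDecidable

/-- The spectral radius (largest eigenvalue) of a real symmetric matrix,
as the supremum of its real spectrum. -/
noncomputable def specRad {V : Type*} [Fintype V] [DecidableEq V] (A : Matrix V V ℝ) : ℝ :=
  sSup (spectrum ℝ A)

/-- Multiplication of vertices: `G ∘ (n₁,…,n_k)`. -/
def blowup {k : ℕ} (G : SimpleGraph (Fin k)) (n : Fin k → ℕ) :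
    SimpleGraph (Σ i, Fin (n i)) :=
  G.comap Sigma.fst

/-- The reduced graph `G₁₀` on `{v₁,…,v₆}` with edges
`v₁v₂, v₁v₃, v₁v₄, v₂v₃, v₂v₅, v₃v₅, v₄v₆` (0-indexed). -/
def G₁₀ : SimpleGraph (Fin 6) :=
  SimpleGraph.fromEdgeSet
    {Sym2.mk 0 1, Sym2.mk 0 2, Sym2.mk 0 3, Sym2.mk 1 2,
      Sym2.mk 1 4, Sym2.mk 2 4, Sym2.mk 3 5}

private lemma gnadj_0_0 : ¬ G₁₀.Adj 0 0 := by
  simp only [G₁₀, SimpleGraph.fromEdgeSet_adj, Set.mem_insert_iff, Set.mem_singleton_iff,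
    Sym2.eq_iff]
  decide

private lemma gadj_0_1 : G₁₀.Adj 0 1 := by
  simp only [G₁₀, SimpleGraph.fromEdgeSet_adj, Set.mem_insert_iff, Set.mem_singleton_iff,
    Sym2.eq_iff]
  decide

private lemma gadj_0_2 : G₁₀.Adj 0 2 := by
  simp only [G₁₀, SimpleGraph.fromEdgeSet_adj, Set.mem_insert_iff, Set.mem_singleton_iff,
    Sym2.eq_iff]
  decide

private lemma gadj_0_3 : G₁₀.Adj 0 3 := by
  simp only [G₁₀, SimpleGraph.fromEdgeSet_adj, Set.mem_insert_iff, Set.mem_singleton_iff,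
    Sym2.eq_iff]
  decide

private lemma gnadj_0_4 : ¬ G₁₀.Adj 0 4 := by
  simp only [G₁₀, SimpleGraph.fromEdgeSet_adj, Set.mem_insert_iff, Set.mem_singleton_iff,
    Sym2.eq_iff]
  decide

private lemma gnadj_0_5 : ¬ G₁₀.Adj 0 5 := by
  simp only [G₁₀, SimpleGraph.fromEdgeSet_adj, Set.mem_insert_iff, Set.mem_singleton_iff,
    Sym2.eq_iff]
  decide

private lemma gadj_1_0 : G₁₀.Adj 1 0 := by
  simp only [G₁₀, SimpleGraph.fromEdgeSet_adj, Set.mem_insert_iff, Set.mem_singleton_iff,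
    Sym2.eq_iff]
  decide

private lemma gnadj_1_1 : ¬ G₁₀.Adj 1 1 := by
  simp only [G₁₀, SimpleGraph.fromEdgeSet_adj, Set.mem_insert_iff, Set.mem_singleton_iff,
    Sym2.eq_iff]
  decide

private lemma gadj_1_2 : G₁₀.Adj 1 2 := by
  simp only [G₁₀, SimpleGraph.fromEdgeSet_adj, Set.mem_insert_iff, Set.mem_singleton_iff,
    Sym2.eq_iff]
  decide

private lemma gnadj_1_3 : ¬ G₁₀.Adj 1 3 := by
  simp only [G₁₀, SimpleGraph.fromEdgeSet_adj, Set.mem_insert_iff, Set.mem_singleton_iff,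
    Sym2.eq_iff]
  decide

private lemma gadj_1_4 : G₁₀.Adj 1 4 := by
  simp only [G₁₀, SimpleGraph.fromEdgeSet_adj, Set.mem_insert_iff, Set.mem_singleton_iff,
    Sym2.eq_iff]
  decide

private lemma gnadj_1_5 : ¬ G₁₀.Adj 1 5 := by
  simp only [G₁₀, SimpleGraph.fromEdgeSet_adj, Set.mem_insert_iff, Set.mem_singleton_iff,
    Sym2.eq_iff]
  decide

private lemma gadj_2_0 : G₁₀.Adj 2 0 := by
  simp only [G₁₀, SimpleGraph.fromEdgeSet_adj, Set.mem_insert_iff, Set.mem_singleton_iff,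
    Sym2.eq_iff]
  decide

private lemma gadj_2_1 : G₁₀.Adj 2 1 := by
  simp only [G₁₀, SimpleGraph.fromEdgeSet_adj, Set.mem_insert_iff, Set.mem_singleton_iff,
    Sym2.eq_iff]
  decide

private lemma gnadj_2_2 : ¬ G₁₀.Adj 2 2 := by
  simp only [G₁₀, SimpleGraph.fromEdgeSet_adj, Set.mem_insert_iff, Set.mem_singleton_iff,
    Sym2.eq_iff]
  decide

private lemma gnadj_2_3 : ¬ G₁₀.Adj 2 3 := by
  simp only [G₁₀, SimpleGraph.fromEdgeSet_adj, Set.mem_insert_iff, Set.mem_singleton_iff,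
    Sym2.eq_iff]
  decide

private lemma gadj_2_4 : G₁₀.Adj 2 4 := by
  simp only [G₁₀, SimpleGraph.fromEdgeSet_adj, Set.mem_insert_iff, Set.mem_singleton_iff,
    Sym2.eq_iff]
  decide

private lemma gnadj_2_5 : ¬ G₁₀.Adj 2 5 := by
  simp only [G₁₀, SimpleGraph.fromEdgeSet_adj, Set.mem_insert_iff, Set.mem_singleton_iff,
    Sym2.eq_iff]
  decide

private lemma gadj_3_0 : G₁₀.Adj 3 0 := by
  simp only [G₁₀, SimpleGraph.fromEdgeSet_adj, Set.mem_insert_iff, Set.mem_singleton_iff,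
    Sym2.eq_iff]
  decide

private lemma gnadj_3_1 : ¬ G₁₀.Adj 3 1 := by
  simp only [G₁₀, SimpleGraph.fromEdgeSet_adj, Set.mem_insert_iff, Set.mem_singleton_iff,
    Sym2.eq_iff]
  decide

private lemma gnadj_3_2 : ¬ G₁₀.Adj 3 2 := by
  simp only [G₁₀, SimpleGraph.fromEdgeSet_adj, Set.mem_insert_iff, Set.mem_singleton_iff,
    Sym2.eq_iff]
  decide

private lemma gnadj_3_3 : ¬ G₁₀.Adj 3 3 := by
  simp only [G₁₀, SimpleGraph.fromEdgeSet_adj, Set.mem_insert_iff, Set.mem_singleton_iff,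
    Sym2.eq_iff]
  decide

private lemma gnadj_3_4 : ¬ G₁₀.Adj 3 4 := by
  simp only [G₁₀, SimpleGraph.fromEdgeSet_adj, Set.mem_insert_iff, Set.mem_singleton_iff,
    Sym2.eq_iff]
  decide

private lemma gadj_3_5 : G₁₀.Adj 3 5 := by
  simp only [G₁₀, SimpleGraph.fromEdgeSet_adj, Set.mem_insert_iff, Set.mem_singleton_iff,
    Sym2.eq_iff]
  decide

private lemma gnadj_4_0 : ¬ G₁₀.Adj 4 0 := by
  simp only [G₁₀, SimpleGraph.fromEdgeSet_adj, Set.mem_insert_iff, Set.mem_singleton_iff,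
    Sym2.eq_iff]
  decide

private lemma gadj_4_1 : G₁₀.Adj 4 1 := by
  simp only [G₁₀, SimpleGraph.fromEdgeSet_adj, Set.mem_insert_iff, Set.mem_singleton_iff,
    Sym2.eq_iff]
  decide

private lemma gadj_4_2 : G₁₀.Adj 4 2 := by
  simp only [G₁₀, SimpleGraph.fromEdgeSet_adj, Set.mem_insert_iff, Set.mem_singleton_iff,
    Sym2.eq_iff]
  decide

private lemma gnadj_4_3 : ¬ G₁₀.Adj 4 3 := by
  simp only [G₁₀, SimpleGraph.fromEdgeSet_adj, Set.mem_insert_iff, Set.mem_singleton_iff,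
    Sym2.eq_iff]
  decide

private lemma gnadj_4_4 : ¬ G₁₀.Adj 4 4 := by
  simp only [G₁₀, SimpleGraph.fromEdgeSet_adj, Set.mem_insert_iff, Set.mem_singleton_iff,
    Sym2.eq_iff]
  decide

private lemma gnadj_4_5 : ¬ G₁₀.Adj 4 5 := by
  simp only [G₁₀, SimpleGraph.fromEdgeSet_adj, Set.mem_insert_iff, Set.mem_singleton_iff,
    Sym2.eq_iff]
  decide

private lemma gnadj_5_0 : ¬ G₁₀.Adj 5 0 := by
  simp only [G₁₀, SimpleGraph.fromEdgeSet_adj, Set.mem_insert_iff, Set.mem_singleton_iff,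
    Sym2.eq_iff]
  decide

private lemma gnadj_5_1 : ¬ G₁₀.Adj 5 1 := by
  simp only [G₁₀, SimpleGraph.fromEdgeSet_adj, Set.mem_insert_iff, Set.mem_singleton_iff,
    Sym2.eq_iff]
  decide

private lemma gnadj_5_2 : ¬ G₁₀.Adj 5 2 := by
  simp only [G₁₀, SimpleGraph.fromEdgeSet_adj, Set.mem_insert_iff, Set.mem_singleton_iff,
    Sym2.eq_iff]
  decide

private lemma gadj_5_3 : G₁₀.Adj 5 3 := by
  simp only [G₁₀, SimpleGraph.fromEdgeSet_adj, Set.mem_insert_iff, Set.mem_singleton_iff,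
    Sym2.eq_iff]
  decide

private lemma gnadj_5_4 : ¬ G₁₀.Adj 5 4 := by
  simp only [G₁₀, SimpleGraph.fromEdgeSet_adj, Set.mem_insert_iff, Set.mem_singleton_iff,
    Sym2.eq_iff]
  decide

private lemma gnadj_5_5 : ¬ G₁₀.Adj 5 5 := by
  simp only [G₁₀, SimpleGraph.fromEdgeSet_adj, Set.mem_insert_iff, Set.mem_singleton_iff,
    Sym2.eq_iff]
  decide

private lemma grow_0 (a : Fin 6) (ha : (a : ℕ) = 0) (Y : Fin 6 → ℝ) :
    ∑ b : Fin 6, (if G₁₀.Adj a b then (1:ℝ) else 0) * Y b = Y 1 + Y 2 + Y 3 := by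
  have haa : a = 0 := Fin.ext (by rw [ha]; decide)
  subst haa
  rw [Fin.sum_univ_six]
  rw [if_neg (gnadj_0_0), if_pos (gadj_0_1), if_pos (gadj_0_2), if_pos (gadj_0_3), if_neg (gnadj_0_4), if_neg (gnadj_0_5)]
  ring

private lemma grow_1 (a : Fin 6) (ha : (a : ℕ) = 1) (Y : Fin 6 → ℝ) :
    ∑ b : Fin 6, (if G₁₀.Adj a b then (1:ℝ) else 0) * Y b = Y 0 + Y 2 + Y 4 := by
  have haa : a = 1 := Fin.ext (by rw [ha]; decide)
  subst haa
  rw [Fin.sum_univ_six]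
  rw [if_pos (gadj_1_0), if_neg (gnadj_1_1), if_pos (gadj_1_2), if_neg (gnadj_1_3), if_pos (gadj_1_4), if_neg (gnadj_1_5)]
  ring

private lemma grow_2 (a : Fin 6) (ha : (a : ℕ) = 2) (Y : Fin 6 → ℝ) :
    ∑ b : Fin 6, (if G₁₀.Adj a b then (1:ℝ) else 0) * Y b = Y 0 + Y 1 + Y 4 := by
  have haa : a = 2 := Fin.ext (by rw [ha]; decide)
  subst haa
  rw [Fin.sum_univ_six]
  rw [if_pos (gadj_2_0), if_pos (gadj_2_1), if_neg (gnadj_2_2), if_neg (gnadj_2_3), if_pos (gadj_2_4), if_neg (gnadj_2_5)]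
  ring

private lemma grow_3 (a : Fin 6) (ha : (a : ℕ) = 3) (Y : Fin 6 → ℝ) :
    ∑ b : Fin 6, (if G₁₀.Adj a b then (1:ℝ) else 0) * Y b = Y 0 + Y 5 := by
  have haa : a = 3 := Fin.ext (by rw [ha]; decide)
  subst haa
  rw [Fin.sum_univ_six]
  rw [if_pos (gadj_3_0), if_neg (gnadj_3_1), if_neg (gnadj_3_2), if_neg (gnadj_3_3), if_neg (gnadj_3_4), if_pos (gadj_3_5)]
  ring

private lemma grow_4 (a : Fin 6) (ha : (a : ℕ) = 4) (Y : Fin 6 → ℝ) :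
    ∑ b : Fin 6, (if G₁₀.Adj a b then (1:ℝ) else 0) * Y b = Y 1 + Y 2 := by
  have haa : a = 4 := Fin.ext (by rw [ha]; decide)
  subst haa
  rw [Fin.sum_univ_six]
  rw [if_neg (gnadj_4_0), if_pos (gadj_4_1), if_pos (gadj_4_2), if_neg (gnadj_4_3), if_neg (gnadj_4_4), if_neg (gnadj_4_5)]
  ring

private lemma grow_5 (a : Fin 6) (ha : (a : ℕ) = 5) (Y : Fin 6 → ℝ) :
    ∑ b : Fin 6, (if G₁₀.Adj a b then (1:ℝ) else 0) * Y b = Y 3 := by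
  have haa : a = 5 := Fin.ext (by rw [ha]; decide)
  subst haa
  rw [Fin.sum_univ_six]
  rw [if_neg (gnadj_5_0), if_neg (gnadj_5_1), if_neg (gnadj_5_2), if_pos (gadj_5_3), if_neg (gnadj_5_4), if_neg (gnadj_5_5)]
  ring

private lemma mulVec_blowup (s : Fin 6 → ℕ) (v : (Σ a, Fin (s a)) → ℝ) (u : Σ a, Fin (s a)) :
    ((blowup G₁₀ s).adjMatrix ℝ).mulVec v u
      = ∑ b : Fin 6, (if G₁₀.Adj u.1 b then (1:ℝ) else 0) * ∑ t : Fin (s b), v ⟨b, t⟩ := by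
  unfold Matrix.mulVec dotProduct
  rw [← Finset.univ_sigma_univ, Finset.sum_sigma]
  refine Finset.sum_congr rfl fun b _ => ?_
  rw [Finset.mul_sum]
  refine Finset.sum_congr rfl fun t _ => ?_
  unfold SimpleGraph.adjMatrix; simp [blowup]

private lemma mem_spec_iff {V : Type*} [Fintype V] [DecidableEq V] (A : Matrix V V ℝ) (μ : ℝ) :
    μ ∈ spectrum ℝ A ↔ ∃ v, v ≠ 0 ∧ A.mulVec v = μ • v := by
  rw [spectrum.mem_iff, Matrix.isUnit_iff_isUnit_det, isUnit_iff_ne_zero, not_not,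
    ← Matrix.exists_mulVec_eq_zero_iff]
  constructor
  · rintro ⟨v, hv, h⟩
    refine ⟨v, hv, ?_⟩
    rwa [Matrix.sub_mulVec, sub_eq_zero, Algebra.algebraMap_eq_smul_one,
      Matrix.smul_mulVec, Matrix.one_mulVec, eq_comm] at h
  · rintro ⟨v, hv, h⟩
    refine ⟨v, hv, ?_⟩
    rw [Matrix.sub_mulVec, sub_eq_zero, Algebra.algebraMap_eq_smul_one,
      Matrix.smul_mulVec, Matrix.one_mulVec, h]

set_option maxHeartbeats 1000000 in
/-- For `1 ≤ i ≤ (n−4)/2`, the spectral radius `ρᵢ` of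
`F_n(i) = G₁₀∘(1,1,1,1,i,n−4−i)` satisfies
`(ρᵢ² − n + i + 3)(ρᵢ² − ρᵢ − 2i − 2) = 2` with both factors positive. -/
theorem stmt_19 (n i : ℕ) (hi₁ : 1 ≤ i) (hi₂ : i ≤ (n - 4) / 2) :
    (specRad ((blowup G₁₀ ![1, 1, 1, 1, i, n - 4 - i]).adjMatrix ℝ) ^ 2
        - (n : ℝ) + (i : ℝ) + 3) *
      (specRad ((blowup G₁₀ ![1, 1, 1, 1, i, n - 4 - i]).adjMatrix ℝ) ^ 2
        - specRad ((blowup G₁₀ ![1, 1, 1, 1, i, n - 4 - i]).adjMatrix ℝ)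
        - 2 * (i : ℝ) - 2) = 2 ∧
    0 < specRad ((blowup G₁₀ ![1, 1, 1, 1, i, n - 4 - i]).adjMatrix ℝ) ^ 2
        - (n : ℝ) + (i : ℝ) + 3 ∧
    0 < specRad ((blowup G₁₀ ![1, 1, 1, 1, i, n - 4 - i]).adjMatrix ℝ) ^ 2
        - specRad ((blowup G₁₀ ![1, 1, 1, 1, i, n - 4 - i]).adjMatrix ℝ)
        - 2 * (i : ℝ) - 2 := by
  -- Basic numeric facts
  have hnum : 2 * i + 4 ≤ n ∧ 1 ≤ n - 4 - i ∧ i ≤ n - 4 - i ∧ 6 ≤ n := by omega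
  obtain ⟨hn4, hj1, hij, hn6⟩ := hnum
  set s : Fin 6 → ℕ := ![1, 1, 1, 1, i, n - 4 - i] with hs
  set A := (blowup G₁₀ s).adjMatrix ℝ with hA
  set ρ := specRad A with hρdef
  have hiR : (1 : ℝ) ≤ (i : ℝ) := by exact_mod_cast hi₁
  have hJcast : ((n - 4 - i : ℕ) : ℝ) = (n : ℝ) - 4 - (i : ℝ) := by
    have h' : n - 4 - i = n - (4 + i) := by omega
    rw [h', Nat.cast_sub (by omega)]
    push_cast; ring
  have hJi : (i : ℝ) ≤ (n : ℝ) - 4 - (i : ℝ) := by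
    rw [← hJcast]; exact_mod_cast hij
  obtain ⟨x₀, r, hx₀ge, hrx₀, hrq, hposFG⟩ :=
    exists_good_root (i : ℝ) ((n : ℝ) - 4 - (i : ℝ)) hiR hJi
  obtain ⟨hrFpos, hrGpos⟩ := hposFG r hrx₀
  have hrge : (5 / 2 : ℝ) < r := lt_of_le_of_lt hx₀ge hrx₀
  have hrpos : (0 : ℝ) < r := by linarith
  -- the eigenvector witnessing that r is an eigenvalue of A
  set c : Fin 6 → ℝ :=
    ![(r ^ 2 - r - 2 * (i : ℝ)) * (r ^ 2 - ((n : ℝ) - 4 - (i : ℝ))),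
      r * (r ^ 2 - ((n : ℝ) - 4 - (i : ℝ))),
      r * (r ^ 2 - ((n : ℝ) - 4 - (i : ℝ))),
      r * (r ^ 2 - r - 2 * (i : ℝ)),
      2 * (r ^ 2 - ((n : ℝ) - 4 - (i : ℝ))),
      r ^ 2 - r - 2 * (i : ℝ)] with hc
  have hpos : ∀ a : Fin 6, 0 < s a := by
    intro a
    rcases a with ⟨av, hav⟩
    interval_cases av
    · show (0 : ℕ) < 1; omega
    · show (0 : ℕ) < 1; omega
    · show (0 : ℕ) < 1; omega
    · show (0 : ℕ) < 1; omega
    · show (0 : ℕ) < i; omega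
    · show (0 : ℕ) < n - 4 - i; omega
  set v : (Σ a, Fin (s a)) → ℝ := fun u => c u.1 with hv
  have hc5 : c 5 = r ^ 2 - r - 2 * (i : ℝ) := rfl
  have hvne : v ≠ 0 := by
    intro h
    have h5 := congrFun h ⟨5, ⟨0, hpos 5⟩⟩
    have hz : c 5 = 0 := h5
    rw [hc5] at hz
    linarith
  have hsc4 : ((s 4 : ℕ) : ℝ) = (i : ℝ) := rfl
  have hsc0 : ((s 0 : ℕ) : ℝ) = 1 := Nat.cast_one
  have hsc1 : ((s 1 : ℕ) : ℝ) = 1 := Nat.cast_one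
  have hsc2 : ((s 2 : ℕ) : ℝ) = 1 := Nat.cast_one
  have hsc3 : ((s 3 : ℕ) : ℝ) = 1 := Nat.cast_one
  have hsc5 : ((s 5 : ℕ) : ℝ) = (n : ℝ) - 4 - (i : ℝ) := by
    show ((n - 4 - i : ℕ) : ℝ) = _
    exact hJcast
  have heig : A.mulVec v = r • v := by
    funext u
    obtain ⟨a, t⟩ := u
    rw [hA, mulVec_blowup]
    have hY : ∀ b : Fin 6, ∑ t' : Fin (s b), v ⟨b, t'⟩ = ((s b : ℕ) : ℝ) * c b := by
      intro b
      rw [show (fun t' : Fin (s b) => v ⟨b, t'⟩) = fun _ => c b from rfl]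
      rw [Finset.sum_const, Finset.card_univ, Fintype.card_fin, nsmul_eq_mul]
    simp only [hY]
    have hrhs : (r • v) ⟨a, t⟩ = r * c a := rfl
    rw [hrhs]
    rcases a with ⟨av, hav⟩
    interval_cases av
    · rw [grow_0 _ rfl]
      show ((1:ℕ):ℝ) * (r * (r ^ 2 - ((n:ℝ) - 4 - i))) + ((1:ℕ):ℝ) * (r * (r ^ 2 - ((n:ℝ) - 4 - i)))
          + ((1:ℕ):ℝ) * (r * (r ^ 2 - r - 2 * (i:ℝ)))
          = r * ((r ^ 2 - r - 2 * (i:ℝ)) * (r ^ 2 - ((n:ℝ) - 4 - i)))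
      push_cast
      linear_combination (-r) * hrq
    · rw [grow_1 _ rfl]
      show ((1:ℕ):ℝ) * ((r ^ 2 - r - 2 * (i:ℝ)) * (r ^ 2 - ((n:ℝ) - 4 - i)))
          + ((1:ℕ):ℝ) * (r * (r ^ 2 - ((n:ℝ) - 4 - i)))
          + ((i:ℕ):ℝ) * (2 * (r ^ 2 - ((n:ℝ) - 4 - i))) = r * (r * (r ^ 2 - ((n:ℝ) - 4 - i)))
      push_cast
      ring
    · rw [grow_2 _ rfl]
      show ((1:ℕ):ℝ) * ((r ^ 2 - r - 2 * (i:ℝ)) * (r ^ 2 - ((n:ℝ) - 4 - i)))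
          + ((1:ℕ):ℝ) * (r * (r ^ 2 - ((n:ℝ) - 4 - i)))
          + ((i:ℕ):ℝ) * (2 * (r ^ 2 - ((n:ℝ) - 4 - i))) = r * (r * (r ^ 2 - ((n:ℝ) - 4 - i)))
      push_cast
      ring
    · rw [grow_3 _ rfl]
      show ((1:ℕ):ℝ) * ((r ^ 2 - r - 2 * (i:ℝ)) * (r ^ 2 - ((n:ℝ) - 4 - i)))
          + ((n - 4 - i : ℕ):ℝ) * (r ^ 2 - r - 2 * (i:ℝ)) = r * (r * (r ^ 2 - r - 2 * (i:ℝ)))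
      rw [hJcast]
      push_cast
      ring
    · rw [grow_4 _ rfl]
      show ((1:ℕ):ℝ) * (r * (r ^ 2 - ((n:ℝ) - 4 - i))) + ((1:ℕ):ℝ) * (r * (r ^ 2 - ((n:ℝ) - 4 - i)))
          = r * (2 * (r ^ 2 - ((n:ℝ) - 4 - i)))
      push_cast
      ring
    · rw [grow_5 _ rfl]
      show ((1:ℕ):ℝ) * (r * (r ^ 2 - r - 2 * (i:ℝ))) = r * (r ^ 2 - r - 2 * (i:ℝ))
      push_cast
      ring
  have hrmem : r ∈ spectrum ℝ A := (mem_spec_iff A r).mpr ⟨v, hvne, heig⟩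
  -- spectral radius facts
  have hfin : (spectrum ℝ A).Finite := A.finite_spectrum
  have hρmem : ρ ∈ spectrum ℝ A := by
    rw [hρdef]
    exact Set.Nonempty.csSup_mem ⟨r, hrmem⟩ hfin
  have hrρ : r ≤ ρ := by
    rw [hρdef]
    exact le_csSup hfin.bddAbove hrmem
  have hx₀ρ : x₀ < ρ := lt_of_lt_of_le hrx₀ hrρ
  obtain ⟨hρFpos, hρGpos⟩ := hposFG ρ hx₀ρ
  have hρge : (5 / 2 : ℝ) < ρ := lt_of_le_of_lt hx₀ge hx₀ρ
  have hρpos : (0 : ℝ) < ρ := by linarith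
  have hρne : ρ ≠ 0 := ne_of_gt hρpos
  -- extract an eigenvector of A for ρ
  obtain ⟨w, hwne, hweig⟩ := (mem_spec_iff A ρ).mp hρmem
  set c' : Fin 6 → ℝ := fun a => w ⟨a, ⟨0, hpos a⟩⟩ with hc'
  have hweq : ∀ (a : Fin 6) (t : Fin (s a)),
      ρ * w ⟨a, t⟩
        = ∑ b : Fin 6, (if G₁₀.Adj a b then (1:ℝ) else 0) * ∑ t' : Fin (s b), w ⟨b, t'⟩ := by
    intro a t
    have h1 := congrFun hweig ⟨a, t⟩
    rw [hA, mulVec_blowup] at h1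
    exact h1.symm
  have hwconst : ∀ (a : Fin 6) (t : Fin (s a)), w ⟨a, t⟩ = c' a := by
    intro a t
    have h1 := hweq a t
    have h2 := hweq a ⟨0, hpos a⟩
    exact mul_left_cancel₀ hρne (h1.trans h2.symm)
  have hY' : ∀ b : Fin 6, ∑ t' : Fin (s b), w ⟨b, t'⟩ = ((s b : ℕ) : ℝ) * c' b := by
    intro b
    rw [show (fun t' : Fin (s b) => w ⟨b, t'⟩) = fun _ => c' b from funext fun t' => hwconst b t']
    rw [Finset.sum_const, Finset.card_univ, Fintype.card_fin, nsmul_eq_mul]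
  have heqn : ∀ a : Fin 6,
      ρ * c' a = ∑ b : Fin 6, (if G₁₀.Adj a b then (1:ℝ) else 0) * (((s b : ℕ) : ℝ) * c' b) := by
    intro a
    have h1 := hweq a ⟨0, hpos a⟩
    simp only [hY'] at h1
    rw [← h1, hwconst a ⟨0, hpos a⟩]
  have e0 : ρ * c' 0 = c' 1 + c' 2 + c' 3 := by
    have h := heqn 0; rw [grow_0 _ rfl] at h
    rw [h, hsc1, hsc2, hsc3]; ring
  have e1 : ρ * c' 1 = c' 0 + c' 2 + (i : ℝ) * c' 4 := by
    have h := heqn 1; rw [grow_1 _ rfl] at h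
    rw [h, hsc0, hsc2, hsc4]; ring
  have e2 : ρ * c' 2 = c' 0 + c' 1 + (i : ℝ) * c' 4 := by
    have h := heqn 2; rw [grow_2 _ rfl] at h
    rw [h, hsc0, hsc1, hsc4]; ring
  have e3 : ρ * c' 3 = c' 0 + ((n : ℝ) - 4 - (i : ℝ)) * c' 5 := by
    have h := heqn 3; rw [grow_3 _ rfl] at h
    rw [h, hsc0, hsc5]; ring
  have e4 : ρ * c' 4 = c' 1 + c' 2 := by
    have h := heqn 4; rw [grow_4 _ rfl] at h
    rw [h, hsc1, hsc2]; ring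
  have e5 : ρ * c' 5 = c' 3 := by
    have h := heqn 5; rw [grow_5 _ rfl] at h
    rw [h, hsc3]; ring
  -- symmetric coordinates
  have h12 : c' 1 = c' 2 := by
    have h0 : (c' 1 - c' 2) * (ρ + 1) = 0 := by linear_combination e1 - e2
    rcases mul_eq_zero.mp h0 with h | h
    · linarith
    · linarith
  have hA1 : (ρ ^ 2 - ρ - 2 * (i : ℝ)) * c' 1 = ρ * c' 0 := by
    linear_combination ρ * e1 + (i : ℝ) * e4 + (-ρ - (i : ℝ)) * h12
  have hA2 : (ρ ^ 2 - ((n : ℝ) - 4 - (i : ℝ))) * c' 5 = c' 0 := by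
    linear_combination ρ * e5 + e3
  have hD1pos : 0 < ρ ^ 2 - ρ - 2 * (i : ℝ) := by linarith
  have hD2pos : 0 < ρ ^ 2 - ((n : ℝ) - 4 - (i : ℝ)) := by linarith
  have hc0ne : c' 0 ≠ 0 := by
    intro hc0
    have hc1 : c' 1 = 0 := by
      have h := hA1; rw [hc0, mul_zero] at h
      exact (mul_eq_zero.mp h).resolve_left (ne_of_gt hD1pos)
    have hc5' : c' 5 = 0 := by
      have h := hA2; rw [hc0] at h
      exact (mul_eq_zero.mp h).resolve_left (ne_of_gt hD2pos)
    have hc3 : c' 3 = 0 := by rw [← e5, hc5', mul_zero]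
    have hc2 : c' 2 = 0 := by rw [← h12]; exact hc1
    have hc4 : c' 4 = 0 := by
      have h := e4; rw [hc1, hc2] at h
      have h' : ρ * c' 4 = 0 := by linarith
      exact (mul_eq_zero.mp h').resolve_left hρne
    apply hwne
    funext u
    obtain ⟨a, t⟩ := u
    rw [hwconst a t]
    show c' a = 0
    rcases a with ⟨av, hav⟩
    interval_cases av
    · exact hc0
    · exact hc1
    · exact hc2
    · exact hc3
    · exact hc4
    · exact hc5'
  have hkey : ρ * c' 0 * ((ρ ^ 2 - ρ - 2 * (i : ℝ)) * (ρ ^ 2 - ((n : ℝ) - 4 - (i : ℝ)))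
      - 2 * (ρ ^ 2 - ((n : ℝ) - 4 - (i : ℝ))) - (ρ ^ 2 - ρ - 2 * (i : ℝ))) = 0 := by
    linear_combination
      ((ρ ^ 2 - ρ - 2 * (i : ℝ)) * (ρ ^ 2 - ((n : ℝ) - 4 - (i : ℝ)))) * e0
      + (-((ρ ^ 2 - ρ - 2 * (i : ℝ)) * (ρ ^ 2 - ((n : ℝ) - 4 - (i : ℝ))))) * h12
      + (2 * (ρ ^ 2 - ((n : ℝ) - 4 - (i : ℝ)))) * hA1
      + (-((ρ ^ 2 - ρ - 2 * (i : ℝ)) * (ρ ^ 2 - ((n : ℝ) - 4 - (i : ℝ))))) * e5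
      + (ρ * (ρ ^ 2 - ρ - 2 * (i : ℝ))) * hA2
  have hfact : (ρ ^ 2 - ρ - 2 * (i : ℝ)) * (ρ ^ 2 - ((n : ℝ) - 4 - (i : ℝ)))
      - 2 * (ρ ^ 2 - ((n : ℝ) - 4 - (i : ℝ))) - (ρ ^ 2 - ρ - 2 * (i : ℝ)) = 0 := by
    rcases mul_eq_zero.mp hkey with h | h
    · exact absurd (mul_eq_zero.mp h) (by push_neg; exact ⟨hρne, hc0ne⟩)
    · exact h
  refine ⟨?_, by linarith, by linarith⟩
  linear_combination hfact
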